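/- Let w, w' be complex numbers and 0 < ε < 1 with |w' − w| < ε|w|. Write w = r·e^{iη} with r = |w| > 0, and let r' = |w'|. Then there exists a unique real number η' with |η' − η| < (π/2)·ε such that w' = r'·e^{iη'}, and moreover |r' − r| < ε·r. -/

import Mathlib

open Real

/-- Lemma 4: polar-coordinate comparison of nearby complex numbers. -/
theorem polar_angle_estimate
    (w w' : ℂ) (ε η : ℝ)
    (hε0 : 0 < ε) (hε1 : ε < 1)
    (hw0 : w ≠ 0)
    (hclose : ‖w' - w‖ < ε * ‖w‖)
    (hpolar : w = (‖w‖ : ℂ) * Complex.exp (η * Complex.I)) :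
    (∃! η' : ℝ, |η' - η| < π / 2 * ε ∧
      w' = (‖w'‖ : ℂ) * Complex.exp (η' * Complex.I)) ∧
    |‖w'‖ - ‖w‖| < ε * ‖w‖ := by
  have hAw : 0 < ‖w‖ := norm_pos_iff.mpr hw0
  have hsecond : |‖w'‖ - ‖w‖| < ε * ‖w‖ := by
    calc |‖w'‖ - ‖w‖| ≤ ‖w' - w‖ :=
          abs_norm_sub_norm_le w' w
      _ < ε * ‖w‖ := hclose
  refine ⟨?_, hsecond⟩
  have hw'0 : w' ≠ 0 := by
    intro h
    rw [h, zero_sub, norm_neg] at hclose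
    nlinarith
  set u : ℂ := w' / w with hu_def
  have hu0 : u ≠ 0 := div_ne_zero hw'0 hw0
  have hu1 : ‖u - 1‖ < ε := by
    have : u - 1 = (w' - w) / w := by rw [hu_def]; field_simp
    rw [this, norm_div]
    rw [div_lt_iff₀ hAw]
    exact hclose
  -- real/imag bounds
  have hsq : (u.re - 1) ^ 2 + u.im ^ 2 < ε ^ 2 := by
    have h1 : ‖u - 1‖ ^ 2 < ε ^ 2 := by
      have := norm_nonneg (u - 1)
      nlinarith
    rw [Complex.sq_norm, Complex.normSq_apply] at h1
    simpa [Complex.sub_re, Complex.sub_im, pow_two] using h1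
  have hre : 0 < u.re := by
    have h1 : |u.re - 1| ≤ ‖u - 1‖ := by
      simpa using Complex.abs_re_le_norm (u - 1)
    have h2 := neg_abs_le (u.re - 1)
    linarith
  have hAu : 0 < ‖u‖ := norm_pos_iff.mpr hu0
  have hAusq : ‖u‖ ^ 2 = u.re ^ 2 + u.im ^ 2 := by
    rw [Complex.sq_norm, Complex.normSq_apply]; ring
  have him : |u.im| < ε * ‖u‖ := by
    have h2 : u.im ^ 2 < (ε * ‖u‖) ^ 2 := by
      nlinarith [sq_nonneg (u.re - 1 + ε ^ 2), sq_nonneg u.im, sq_nonneg (u.re - 1),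
        mul_lt_mul_of_pos_left hsq (show (0:ℝ) < 1 - ε ^ 2 by nlinarith)]
    have h3 : 0 < ε * ‖u‖ := by positivity
    nlinarith [abs_nonneg u.im, sq_abs u.im]
  -- angle bound
  have harg_lt : |u.arg| < π / 2 := by
    rw [Complex.abs_arg_lt_pi_div_two_iff]; exact Or.inl hre
  have hsin : |Real.sin u.arg| < ε := by
    rw [Complex.sin_arg, abs_div, abs_of_pos hAu, div_lt_iff₀ hAu]
    exact him
  have hkey : |u.arg| < π / 2 * ε := by
    have h4 := Real.mul_le_sin (abs_nonneg u.arg) harg_lt.le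
    have h5 : Real.sin |u.arg| = |Real.sin u.arg| := by
      rcases le_or_gt 0 u.arg with h | h
      · rw [abs_of_nonneg h, abs_of_nonneg]
        exact Real.sin_nonneg_of_nonneg_of_le_pi h
          (by linarith [(abs_lt.mp harg_lt).2, le_abs_self u.arg, Real.pi_pos])
      · have hge : -π ≤ u.arg := by linarith [(abs_lt.mp harg_lt).1, Real.pi_pos]
        rw [abs_of_neg h, Real.sin_neg,
          abs_of_nonpos (Real.sin_nonpos_of_nonpos_of_neg_pi_le h.le hge)]
    rw [h5] at h4
    have hπ : 0 < π := Real.pi_pos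
    have : 2 / π * |u.arg| < ε := lt_of_le_of_lt h4 hsin
    calc |u.arg| = π / 2 * (2 / π * |u.arg|) := by field_simp
      _ < π / 2 * ε := by
          apply mul_lt_mul_of_pos_left this (by positivity)
  -- exponential facts
  have hexpη : Complex.exp (η * Complex.I) = w / (‖w‖ : ℂ) := by
    rw [hpolar]
    have : (‖w‖ : ℂ) ≠ 0 := by exact_mod_cast hAw.ne'
    field_simp
    simp [Complex.norm_exp_ofReal_mul_I, this]
  have hexpu : Complex.exp (u.arg * Complex.I) = u / (‖u‖ : ℂ) := by
    have h0 : (‖u‖ : ℂ) ≠ 0 := by exact_mod_cast hAu.ne'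
    rw [eq_div_iff h0, mul_comm]
    exact Complex.norm_mul_exp_arg_mul_I u
  have hAw' : 0 < ‖w'‖ := norm_pos_iff.mpr hw'0
  have hAucast : (‖u‖ : ℂ) = (‖w'‖ : ℂ) / (‖w‖ : ℂ) := by
    rw [hu_def, norm_div]; push_cast; ring
  have hne2 : (‖w'‖ : ℂ) ≠ 0 := by exact_mod_cast hAw'.ne'
  have hmain : w' = (‖w'‖ : ℂ) *
      Complex.exp (((η + u.arg : ℝ) : ℂ) * Complex.I) := by
    have hne1 : (‖w‖ : ℂ) ≠ 0 := by exact_mod_cast hAw.ne'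
    rw [show ((η + u.arg : ℝ) : ℂ) * Complex.I = η * Complex.I + u.arg * Complex.I by
      push_cast; ring, Complex.exp_add, hexpη, hexpu, hAucast, hu_def]
    field_simp
  refine ⟨η + u.arg, ⟨by simpa using hkey, hmain⟩, ?_⟩
  rintro y ⟨hy1, hy2⟩
  have hexpeq : Complex.exp ((y : ℂ) * Complex.I)
      = Complex.exp (((η + u.arg : ℝ) : ℂ) * Complex.I) :=
    mul_left_cancel₀ hne2 (hy2.symm.trans hmain)
  rw [Complex.exp_eq_exp_iff_exists_int] at hexpeq
  obtain ⟨n, hn⟩ := hexpeq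
  have hn' : (y : ℂ) = ((η + u.arg : ℝ) : ℂ) + n * (2 * π) := by
    have : (y : ℂ) * Complex.I = (((η + u.arg : ℝ) : ℂ) + n * (2 * π)) * Complex.I := by
      rw [hn]; ring
    exact mul_right_cancel₀ Complex.I_ne_zero this
  have hnr : y = (η + u.arg) + n * (2 * π) := by exact_mod_cast hn'
  have hπ : 0 < π := Real.pi_pos
  have hdist : |y - (η + u.arg)| < 2 * π := by
    have : |y - (η + u.arg)| ≤ |y - η| + |u.arg| := by
      rw [show y - (η + u.arg) = (y - η) - u.arg by ring]
      exact abs_sub _ _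
    have hεπ : π / 2 * ε < π := by nlinarith
    calc |y - (η + u.arg)| ≤ |y - η| + |u.arg| := this
      _ < π / 2 * ε + π / 2 * ε := by linarith
      _ < 2 * π := by nlinarith
  have hn0 : n = 0 := by
    by_contra h
    have h1 : (1 : ℝ) ≤ |(n : ℝ)| := by
      exact_mod_cast Int.one_le_abs (by exact_mod_cast h)
    have h2 : |y - (η + u.arg)| = |(n : ℝ)| * (2 * π) := by
      rw [hnr, show (η + u.arg) + (n : ℝ) * (2 * π) - (η + u.arg) = (n : ℝ) * (2 * π) by ring,
        abs_mul, abs_of_pos (by positivity : (0:ℝ) < 2 * π)]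
    have h3 : 2 * π ≤ |(n : ℝ)| * (2 * π) := le_mul_of_one_le_left (by positivity) h1
    rw [h2] at hdist
    linarith
  rw [hnr, hn0]
  push_cast; ring
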